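/- Let A be a C*-algebra and D ⊆ A an abelian closed *-subalgebra containing an approximate unit for A. Suppose that n, m ∈ N(D) satisfy ‖n − m‖ < ‖n‖/5. Then α_n(φ) = α_m(φ) for every character φ of D satisfying φ(n*n) > ‖n‖²/2. -/

import Mathlib

open WeakDual Filter Topology Classical

variable {A : Type} [NonUnitalNormedRing A] [StarRing A] [CStarRing A]
  [NormedSpace ℂ A] [IsScalarTower ℂ A A] [SMulCommClass ℂ A A] [CompleteSpace A] [StarModule ℂ A]

/-- Evaluation of a character of `D` at an element of `A` (taken to be `0` off `D`). -/
noncomputable def evalD (D : NonUnitalStarSubalgebra ℂ A) (φ : characterSpace ℂ D) (a : A) : ℂ :=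
  if h : a ∈ D then φ (⟨a, h⟩ : D) else 0

/-- The open support `supp°(a) = {φ ∈ D̂ : φ(a) ≠ 0}`. -/
def suppo (D : NonUnitalStarSubalgebra ℂ A) (a : A) : Set (characterSpace ℂ D) :=
  {φ | evalD D φ a ≠ 0}

/-- `n` is a normaliser of `D` in `A`. -/
def IsNormalizer (D : NonUnitalStarSubalgebra ℂ A) (n : A) : Prop :=
  ∀ d ∈ D, n * d * star n ∈ D ∧ star n * d * n ∈ D

/-- `S` contains an approximate unit for `A`: there is a net in `S` converging
multiplicatively to the identity on every element of `A`. -/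
def HasApproxUnit (S : Set A) : Prop :=
  ∃ (ι : Type) (l : Filter ι) (e : ι → A), l.NeBot ∧ (∀ i, e i ∈ S) ∧
    ∀ a : A, Tendsto (fun i => e i * a) l (nhds a) ∧ Tendsto (fun i => a * e i) l (nhds a)

/-- `α` is "the" homeomorphism `α_n : supp°(n*n) → supp°(nn*)` attached to a normaliser `n`,
i.e. a partial homeomorphism of `D̂` with source `supp°(n*n)`, target `supp°(nn*)`, and
satisfying `φ(n*n)·(α_n φ)(d) = φ(n* d n)` for all `φ` in the source and `d ∈ D`. -/
def IsWeylHomeo (D : NonUnitalStarSubalgebra ℂ A) (n : A)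
    (α : PartialHomeomorph (characterSpace ℂ D) (characterSpace ℂ D)) : Prop :=
  α.source = suppo D (star n * n) ∧ α.target = suppo D (n * star n) ∧
  ∀ φ ∈ α.source, ∀ d ∈ D, evalD D φ (star n * n) * evalD D (α φ) d = evalD D φ (star n * d * n)

/-- The relative commutant `D' = {a ∈ A : a d = d a for all d ∈ D}`, as a set. -/
def commutantSet (D : NonUnitalStarSubalgebra ℂ A) : Set A := {a | ∀ d ∈ D, a * d = d * a}

/-- The ideal `J_φ ⊆ D'`: the closure of `(ker φ)·D'`. -/
noncomputable def Jset (D : NonUnitalStarSubalgebra ℂ A) (φ : characterSpace ℂ D) : Set A :=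
  closure ((Submodule.span ℂ {x : A | ∃ k ∈ (D : Set A), ∃ a ∈ commutantSet D,
    evalD D φ k = 0 ∧ x = k * a} : Submodule ℂ A) : Set A)

/-- `e ∈ D'` represents the unit of `D'/J_φ`. -/
def IsUnitModJ (D : NonUnitalStarSubalgebra ℂ A) (φ : characterSpace ℂ D) (e : A) : Prop :=
  e ∈ commutantSet D ∧ ∀ a ∈ commutantSet D, e * a - a ∈ Jset D φ ∧ a * e - a ∈ Jset D φ

/-- `D` is a weakly Cartan subalgebra of `A`. -/
def IsWeaklyCartan (D : NonUnitalStarSubalgebra ℂ A) : Prop :=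
  IsClosed (D : Set A) ∧ (∀ x ∈ D, ∀ y ∈ D, x * y = y * x) ∧ HasApproxUnit (D : Set A) ∧
  (∀ φ : characterSpace ℂ D, ∃ e, IsUnitModJ D φ e) ∧
  (∀ φ : characterSpace ℂ D, ∃ d ∈ D, ∃ U : Set (characterSpace ℂ D),
    IsOpen U ∧ φ ∈ U ∧ ∀ ψ ∈ U, IsUnitModJ D ψ d)

/-- The relative commutant `D'` as a non-unital star subalgebra of `A`. -/
def commutantAlg (D : NonUnitalStarSubalgebra ℂ A) : NonUnitalStarSubalgebra ℂ A where
  carrier := commutantSet D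
  add_mem' := by
    intro a b ha hb d hd
    simp only [commutantSet, Set.mem_setOf_eq] at *
    rw [add_mul, mul_add, ha d hd, hb d hd]
  zero_mem' := by
    intro d _
    rw [zero_mul, mul_zero]
  mul_mem' := by
    intro a b ha hb d hd
    calc a * b * d = a * (b * d) := by rw [mul_assoc]
      _ = a * (d * b) := by rw [hb d hd]
      _ = a * d * b := by rw [mul_assoc]
      _ = d * a * b := by rw [ha d hd]
      _ = d * (a * b) := by rw [mul_assoc]
  smul_mem' := by
    intro c a ha d hd
    rw [smul_mul_assoc, ha d hd, mul_smul_comm]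
  star_mem' := by
    intro a ha d hd
    calc star a * d = star (star d * a) := by rw [star_mul, star_star]
      _ = star (a * star d) := by rw [← ha (star d) (star_mem hd)]
      _ = d * star a := by rw [star_mul, star_star]

/-- `w` is a representative in `A` of the unitary `U^φ_{n*m}` of `D'/J_φ`:
`w = φ(m*m)^{-1/2}·φ(n*n)^{-1/2}·(d n* m d)` for some admissible `U` and `d`. -/
noncomputable def WeylRep (D : NonUnitalStarSubalgebra ℂ A) (n m : A)
    (φ : characterSpace ℂ D) (w : A) : Prop :=
  ∃ U : Set (characterSpace ℂ D), IsOpen U ∧ φ ∈ U ∧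
    U ⊆ suppo D (star n * n) ∩ suppo D (star m * m) ∧
    (∃ αn αm : PartialHomeomorph (characterSpace ℂ D) (characterSpace ℂ D),
       IsWeylHomeo D n αn ∧ IsWeylHomeo D m αm ∧ Set.EqOn ⇑αn ⇑αm U) ∧
    ∃ d ∈ (D : Set A), suppo D d ⊆ U ∧ evalD D φ d = 1 ∧
      w = (evalD D φ (star m * m) ^ (-(1/2) : ℂ) * evalD D φ (star n * n) ^ (-(1/2) : ℂ)) •
        (d * (star n * m) * d)

/-- The unitary `U^φ_{n*m}` of `D'/J_φ` lies in the connected component of the identity of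
the unitary group of `D'/J_φ`; the quotient `D'/J_φ` is represented by an arbitrary
surjective star-homomorphism `π` from `D'` onto a unital C*-algebra `Q` with kernel `J_φ`. -/
noncomputable def InU0 (D : NonUnitalStarSubalgebra ℂ A) (n m : A)
    (φ : characterSpace ℂ D) : Prop :=
  ∀ (Q : Type) [NormedRing Q] [StarRing Q] [CStarRing Q] [NormedAlgebra ℂ Q]
    [CompleteSpace Q] [StarModule ℂ Q] (π : commutantAlg D →⋆ₙₐ[ℂ] Q),
    Function.Surjective ⇑π →
    (∀ a : commutantAlg D, π a = 0 ↔ (a : A) ∈ Jset D φ) →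
    ∃ w : commutantAlg D, WeylRep D n m φ (w : A) ∧
      ∃ hu : π w ∈ unitary Q, (⟨π w, hu⟩ : unitary Q) ∈ connectedComponent (1 : unitary Q)

/-- The relation `(n, φ) ∼ (m, ψ)` of Lemma 4.7 (for the trivial coaction). -/
noncomputable def WeylSimRaw (D : NonUnitalStarSubalgebra ℂ A) (n : A)
    (φ : characterSpace ℂ D) (m : A) (ψ : characterSpace ℂ D) : Prop :=
  φ = ψ ∧
  (∃ U : Set (characterSpace ℂ D), IsOpen U ∧ φ ∈ U ∧
    U ⊆ suppo D (star n * n) ∩ suppo D (star m * m) ∧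
    ∃ αn αm : PartialHomeomorph (characterSpace ℂ D) (characterSpace ℂ D),
      IsWeylHomeo D n αn ∧ IsWeylHomeo D m αm ∧ Set.EqOn ⇑αn ⇑αm U) ∧
  InU0 D n m φ

/-- The set of pairs `(n, φ)` with `n ∈ N(D)` and `φ ∈ supp°(n*n)`. -/
def WeylPair (D : NonUnitalStarSubalgebra ℂ A) : Type :=
  {p : A × characterSpace ℂ D // IsNormalizer D p.1 ∧ p.2 ∈ suppo D (star p.1 * p.1)}



section Aux

variable {E : Type*} [NonUnitalCStarAlgebra E]

/-- Lift of a character to the unitization. -/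
noncomputable def liftChar (ψ : characterSpace ℂ E) :
    characterSpace ℂ (Unitization ℂ E) :=
  WeakDual.CharacterSpace.equivAlgHom.symm
    (Unitization.lift (WeakDual.CharacterSpace.toNonUnitalAlgHom ψ))

lemma liftChar_inr (ψ : characterSpace ℂ E) (x : E) :
    liftChar ψ (x : Unitization ℂ E) = ψ x := by
  simp [liftChar]

/-- The character at infinity. -/
noncomputable def inftyChar (E : Type*) [NonUnitalCStarAlgebra E] :
    characterSpace ℂ (Unitization ℂ E) :=
  WeakDual.CharacterSpace.equivAlgHom.symm (Unitization.fstHom ℂ E)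

lemma inftyChar_apply (y : Unitization ℂ E) : inftyChar E y = y.fst := by
  simp [inftyChar]

lemma char_norm_le (ψ : characterSpace ℂ E) (x : E) : ‖ψ x‖ ≤ ‖x‖ := by
  have h1 : liftChar ψ (x : Unitization ℂ E) = ψ x := liftChar_inr ψ x
  have h2 : ‖liftChar ψ (x : Unitization ℂ E)‖ ≤
      ‖toStrongDual ((liftChar ψ : characterSpace ℂ (Unitization ℂ E)) :
        WeakDual ℂ (Unitization ℂ E))‖ * ‖(x : Unitization ℂ E)‖ :=
    ContinuousLinearMap.le_opNorm _ _
  have h3 := WeakDual.CharacterSpace.norm_le_norm_one (liftChar ψ)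
  calc ‖ψ x‖ = ‖liftChar ψ (x : Unitization ℂ E)‖ := by rw [h1]
    _ ≤ ‖toStrongDual ((liftChar ψ : characterSpace ℂ (Unitization ℂ E)) :
        WeakDual ℂ (Unitization ℂ E))‖ * ‖(x : Unitization ℂ E)‖ := h2
    _ ≤ ‖(1 : Unitization ℂ E)‖ * ‖(x : Unitization ℂ E)‖ :=
      mul_le_mul_of_nonneg_right h3 (norm_nonneg _)
    _ = ‖x‖ := by rw [norm_one, one_mul, Unitization.norm_inr]

lemma char_exists_ne_zero (ψ : characterSpace ℂ E) : ∃ a : E, ψ a ≠ 0 := by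
  by_contra h
  push_neg at h
  exact ψ.2.1 (ContinuousLinearMap.ext fun a => by exact h a)

end Aux

section Sep

variable {E : Type*} [NonUnitalCommCStarAlgebra E]

lemma char_separate {ψ χ : characterSpace ℂ E} (h : ψ ≠ χ) :
    ∃ x : E, ψ x = 1 ∧ χ x = 0 ∧ ‖x‖ ≤ 1 := by
  classical
  set X := characterSpace ℂ (Unitization ℂ E) with hX
  set Ψ : X := liftChar ψ
  set Χ : X := liftChar χ
  set Θ : X := inftyChar E
  have hΨΧ : Ψ ≠ Χ := by
    intro hEq
    apply h
    ext x
    rw [← liftChar_inr ψ x, ← liftChar_inr χ x]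
    exact DFunLike.congr_fun hEq _
  have hne : ∀ ξ : characterSpace ℂ E, liftChar ξ ≠ Θ := by
    intro ξ hEq
    obtain ⟨a, ha⟩ := char_exists_ne_zero ξ
    have h1 : liftChar ξ (a : Unitization ℂ E) = ξ a := liftChar_inr ξ a
    rw [hEq, inftyChar_apply] at h1
    simp at h1
    exact ha h1.symm
  have hs : IsClosed ({Χ, Θ} : Set X) :=
    ((Set.finite_singleton Θ).insert Χ).isClosed
  have ht : IsClosed ({Ψ} : Set X) := isClosed_singleton
  have hd : Disjoint ({Χ, Θ} : Set X) ({Ψ} : Set X) := by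
    simp only [Set.disjoint_singleton_right, Set.mem_insert_iff, Set.mem_singleton_iff]
    push_neg
    exact ⟨hΨΧ, fun hEq => hne ψ hEq⟩
  obtain ⟨f, hf0, hf1, hf01⟩ := exists_continuous_zero_one_of_isClosed hs ht hd
  set g : C(X, ℂ) := ⟨fun p => (f p : ℂ), Complex.continuous_ofReal.comp f.continuous⟩ with hg
  set y : Unitization ℂ E := (gelfandStarTransform (Unitization ℂ E)).symm g with hy
  have hyap : ∀ θ : X, θ y = g θ := by
    intro θ
    have h1 : gelfandStarTransform (Unitization ℂ E) y = g :=
      (gelfandStarTransform (Unitization ℂ E)).apply_symm_apply g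
    have h2 : (gelfandStarTransform (Unitization ℂ E) y) θ = θ y := by
      simp [gelfandStarTransform]
    rw [← h2, h1]
  have hfst : y.fst = 0 := by
    have := hyap Θ
    rw [inftyChar_apply] at this
    rw [this]
    simpa [hg] using hf0 (by simp : Θ ∈ ({Χ, Θ} : Set X))
  have hyinr : y = ((y.snd : E) : Unitization ℂ E) := by
    conv_lhs => rw [← Unitization.inl_fst_add_inr_snd_eq y]
    rw [hfst]
    simp
  have hnorm_g : ‖g‖ ≤ 1 := by
    rw [ContinuousMap.norm_le _ zero_le_one]
    intro p
    simpa [hg, Complex.norm_real, abs_le] using abs_le.mpr ⟨by linarith [(hf01 p).1], (hf01 p).2⟩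
  have hnorm_y : ‖y‖ ≤ 1 := by
    have hiso := gelfandTransform_isometry (Unitization ℂ E)
    have h1 : gelfandTransform ℂ (Unitization ℂ E) y = g := by
      ext θ
      rw [WeakDual.gelfandTransform_apply_apply]
      exact hyap θ
    have h2 : ‖gelfandTransform ℂ (Unitization ℂ E) y‖ = ‖y‖ :=
      hiso.norm_map_of_map_zero (map_zero _) y
    rw [h1] at h2
    rw [← h2]
    exact hnorm_g
  refine ⟨y.snd, ?_, ?_, ?_⟩
  · have h1 := hyap Ψ
    rw [hyinr] at h1
    rw [liftChar_inr] at h1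
    rw [h1]
    simpa [hg] using hf1 (by simp : Ψ ∈ ({Ψ} : Set X))
  · have h1 := hyap Χ
    rw [hyinr] at h1
    rw [liftChar_inr] at h1
    rw [h1]
    simpa [hg] using hf0 (by simp : Χ ∈ ({Χ, Θ} : Set X))
  · rw [← Unitization.norm_inr (𝕜 := ℂ) (y.snd)]
    rw [← hyinr]
    exact hnorm_y

end Sep

section MainAux

variable {A : Type} [NonUnitalNormedRing A] [StarRing A] [CStarRing A]
  [NormedSpace ℂ A] [IsScalarTower ℂ A A] [SMulCommClass ℂ A A] [CompleteSpace A] [StarModule ℂ A]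

lemma aux_star_mul_self_mem (D : NonUnitalStarSubalgebra ℂ A) (hDclosed : IsClosed (D : Set A))
    (hDapprox : HasApproxUnit (D : Set A)) {n : A} (hn : IsNormalizer D n) :
    star n * n ∈ D := by
  obtain ⟨ι, l, e, hl, hmem, hconv⟩ := hDapprox
  haveI := hl
  have h1 : Tendsto (fun i => star n * e i * n) l (nhds (star n * n)) := by
    have h2 : Tendsto (fun i => e i * n) l (nhds n) := (hconv n).1
    have h3 := h2.const_mul (star n)
    simpa [mul_assoc] using h3
  exact hDclosed.mem_of_tendsto h1 (Filter.Eventually.of_forall fun i => (hn (e i) (hmem i)).2)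

end MainAux

theorem statement_12
    (D : NonUnitalStarSubalgebra ℂ A) (hDclosed : IsClosed (D : Set A))
    (hDabelian : ∀ x ∈ D, ∀ y ∈ D, x * y = y * x)
    (hDapprox : HasApproxUnit (D : Set A))
    (n m : A) (hn : IsNormalizer D n) (hm : IsNormalizer D m)
    (hnm : ‖n - m‖ < ‖n‖ / 5)
    (αn αm : PartialHomeomorph (characterSpace ℂ D) (characterSpace ℂ D))
    (hαn : IsWeylHomeo D n αn) (hαm : IsWeylHomeo D m αm)
    (φ : characterSpace ℂ D) (r : ℝ)
    (hr : evalD D φ (star n * n) = (r : ℂ)) (hr2 : ‖n‖ ^ 2 / 2 < r) :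
    φ ∈ αn.source ∧ φ ∈ αm.source ∧ αn φ = αm φ := by
  classical
  letI instA : NonUnitalCStarAlgebra A := { }
  letI instD : NonUnitalCommCStarAlgebra D :=
    { (NonUnitalStarSubalgebra.nonUnitalCStarAlgebra (h_closed := hDclosed) D) with
      mul_comm := fun x y => Subtype.ext (hDabelian x.1 x.2 y.1 y.2) }
  have hn_pos : 0 < ‖n‖ := by
    by_contra h
    push_neg at h
    have h0 : ‖n‖ = 0 := le_antisymm h (norm_nonneg n)
    rw [h0] at hnm
    have := norm_nonneg (n - m)
    linarith
  have hr_pos : 0 < r := lt_of_le_of_lt (by positivity) hr2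
  have hmem_n : star n * n ∈ D := aux_star_mul_self_mem D hDclosed hDapprox hn
  have hmem_m : star m * m ∈ D := aux_star_mul_self_mem D hDclosed hDapprox hm
  have evalD_eq : ∀ (θ : characterSpace ℂ D) (a : A) (ha : a ∈ D),
      evalD D θ a = θ ⟨a, ha⟩ := by
    intro θ a ha
    simp only [evalD]
    rw [dif_pos ha]
  have evalD_eq' : ∀ (θ : characterSpace ℂ D) (x : D), evalD D θ (x : A) = θ x := by
    intro θ x
    rw [evalD_eq θ (x : A) x.2]
  have hφn : φ ∈ αn.source := by
    rw [hαn.1]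
    show evalD D φ (star n * n) ≠ 0
    rw [hr]
    exact_mod_cast hr_pos.ne'
  -- norm bounds
  have hm_le : ‖m‖ ≤ ‖n‖ + ‖n - m‖ := by
    calc ‖m‖ = ‖n - (n - m)‖ := by rw [sub_sub_cancel]
      _ ≤ ‖n‖ + ‖n - m‖ := norm_sub_le _ _
  have hKlt : (‖n‖ + ‖m‖) * ‖n - m‖ < ‖n‖ ^ 2 / 2 := by
    nlinarith [norm_nonneg (n - m), hn_pos, hnm, hm_le]
  have hbound1 : ‖star n * n - star m * m‖ ≤ (‖n‖ + ‖m‖) * ‖n - m‖ := by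
    have hdec : star n * n - star m * m = star n * (n - m) + star (n - m) * m := by
      rw [star_sub]; noncomm_ring
    rw [hdec]
    have b1 : ‖star n * (n - m)‖ ≤ ‖n‖ * ‖n - m‖ := by
      calc ‖star n * (n - m)‖ ≤ ‖star n‖ * ‖n - m‖ := norm_mul_le _ _
        _ = ‖n‖ * ‖n - m‖ := by rw [norm_star]
    have b2 : ‖star (n - m) * m‖ ≤ ‖n - m‖ * ‖m‖ := by
      calc ‖star (n - m) * m‖ ≤ ‖star (n - m)‖ * ‖m‖ := norm_mul_le _ _
        _ = ‖n - m‖ * ‖m‖ := by rw [norm_star]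
    calc ‖star n * (n - m) + star (n - m) * m‖
        ≤ ‖star n * (n - m)‖ + ‖star (n - m) * m‖ := norm_add_le _ _
      _ ≤ ‖n‖ * ‖n - m‖ + ‖n - m‖ * ‖m‖ := add_le_add b1 b2
      _ = (‖n‖ + ‖m‖) * ‖n - m‖ := by ring
  have hbound2 : ∀ d : A, ‖d‖ ≤ 1 →
      ‖star n * d * n - star m * d * m‖ ≤ (‖n‖ + ‖m‖) * ‖n - m‖ := by
    intro d hd1
    have hdec : star n * d * n - star m * d * m
        = star n * d * (n - m) + star (n - m) * (d * m) := by
      rw [star_sub]; noncomm_ring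
    rw [hdec]
    have b1 : ‖star n * d * (n - m)‖ ≤ ‖n‖ * ‖n - m‖ := by
      calc ‖star n * d * (n - m)‖ ≤ ‖star n * d‖ * ‖n - m‖ := norm_mul_le _ _
        _ ≤ ‖star n‖ * ‖d‖ * ‖n - m‖ :=
          mul_le_mul_of_nonneg_right (norm_mul_le _ _) (norm_nonneg _)
        _ = ‖n‖ * ‖d‖ * ‖n - m‖ := by rw [norm_star]
        _ ≤ ‖n‖ * 1 * ‖n - m‖ := by
          apply mul_le_mul_of_nonneg_right _ (norm_nonneg _)
          exact mul_le_mul_of_nonneg_left hd1 (norm_nonneg _)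
        _ = ‖n‖ * ‖n - m‖ := by rw [mul_one]
    have b2 : ‖star (n - m) * (d * m)‖ ≤ ‖n - m‖ * ‖m‖ := by
      calc ‖star (n - m) * (d * m)‖ ≤ ‖star (n - m)‖ * ‖d * m‖ := norm_mul_le _ _
        _ = ‖n - m‖ * ‖d * m‖ := by rw [norm_star]
        _ ≤ ‖n - m‖ * (‖d‖ * ‖m‖) :=
          mul_le_mul_of_nonneg_left (norm_mul_le _ _) (norm_nonneg _)
        _ ≤ ‖n - m‖ * (1 * ‖m‖) := by
          apply mul_le_mul_of_nonneg_left _ (norm_nonneg _)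
          exact mul_le_mul_of_nonneg_right hd1 (norm_nonneg _)
        _ = ‖n - m‖ * ‖m‖ := by rw [one_mul]
    calc ‖star n * d * (n - m) + star (n - m) * (d * m)‖
        ≤ ‖star n * d * (n - m)‖ + ‖star (n - m) * (d * m)‖ := norm_add_le _ _
      _ ≤ ‖n‖ * ‖n - m‖ + ‖n - m‖ * ‖m‖ := add_le_add b1 b2
      _ = (‖n‖ + ‖m‖) * ‖n - m‖ := by ring
  -- φ ∈ αm.source
  have hrs : ‖(r : ℂ) - φ (⟨star m * m, hmem_m⟩ : D)‖ ≤ (‖n‖ + ‖m‖) * ‖n - m‖ := by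
    have h1 : (r : ℂ) = φ (⟨star n * n, hmem_n⟩ : D) := by
      rw [← hr, evalD_eq φ _ hmem_n]
    rw [h1, ← map_sub]
    have h2 : ‖φ ((⟨star n * n, hmem_n⟩ : D) - (⟨star m * m, hmem_m⟩ : D))‖
        ≤ ‖(⟨star n * n, hmem_n⟩ : D) - (⟨star m * m, hmem_m⟩ : D)‖ := char_norm_le _ _
    have h3 : ‖(⟨star n * n, hmem_n⟩ : D) - (⟨star m * m, hmem_m⟩ : D)‖
        = ‖star n * n - star m * m‖ := rfl
    rw [h3] at h2
    exact h2.trans hbound1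
  have hs_ne : φ (⟨star m * m, hmem_m⟩ : D) ≠ 0 := by
    intro h0
    rw [h0, sub_zero] at hrs
    have : ‖(r : ℂ)‖ = r := by
      rw [Complex.norm_real]; exact Real.norm_of_nonneg hr_pos.le
    rw [this] at hrs
    linarith
  have hφm : φ ∈ αm.source := by
    rw [hαm.1]
    show evalD D φ (star m * m) ≠ 0
    rw [evalD_eq φ _ hmem_m]
    exact hs_ne
  refine ⟨hφn, hφm, ?_⟩
  by_contra hne
  obtain ⟨x, hx1, hx0, hxle⟩ := char_separate hne
  have hweyl_n := hαn.2.2 φ hφn (x : A) x.2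
  have hweyl_m := hαm.2.2 φ hφm (x : A) x.2
  rw [evalD_eq' (αn φ) x, hx1, mul_one, hr,
    evalD_eq φ _ (hn (x : A) x.2).2] at hweyl_n
  rw [evalD_eq' (αm φ) x, hx0, mul_zero,
    evalD_eq φ _ (hm (x : A) x.2).2] at hweyl_m
  set u : D := ⟨star n * (x : A) * n, (hn (x : A) x.2).2⟩
  set v : D := ⟨star m * (x : A) * m, (hm (x : A) x.2).2⟩
  have h5 : (r : ℂ) = φ (u - v) := by
    rw [map_sub, ← hweyl_n, ← hweyl_m, sub_zero]
  have h6 : ‖(r : ℂ)‖ ≤ ‖u - v‖ := h5 ▸ char_norm_le φ (u - v)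
  have h7 : ‖u - v‖ = ‖star n * (x : A) * n - star m * (x : A) * m‖ := rfl
  have h8 : ‖star n * (x : A) * n - star m * (x : A) * m‖ ≤ (‖n‖ + ‖m‖) * ‖n - m‖ :=
    hbound2 _ hxle
  have h9 : ‖(r : ℂ)‖ = r := by rw [Complex.norm_real]; exact Real.norm_of_nonneg hr_pos.le
  rw [h9, h7] at h6
  linarith [h6.trans h8]
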